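/- Let n ≥ 5 and let a be a real number with 1/3 < a < 1. Set ω_a = (1 | a, (1−a)/2, …, (1−a)/2) ∈ ℝ^{1,n} (one entry a followed by n−1 entries (1−a)/2). Then ω_a is normalized reduced, and ω_a·(−K) > 0 if and only if a > (n−7)/(n−3); when this holds, also ω_a·ω_a > 0. In particular, for 5 ≤ n ≤ 9 one has ω_a·(−K) > 0 for every a ∈ (1/3, 1). (Lemma 2.20: the type 𝔻_{n−1} reduced classes lying in the c₁-positive reduced symplectic cone.) -/
import Mathlib


open Finset

noncomputable section

/-- The `m`-coefficients of the class `ω_a = (1 | a, (1-a)/2, …, (1-a)/2)`: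
one entry `a` followed by `n - 1` entries `(1-a)/2`.
Here `omegaM n a i` denotes `m_{i+1}`, so `m_1 = a`. -/
def omegaM (n : ℕ) (a : ℝ) : Fin n → ℝ := fun i => if (i : ℕ) = 0 then a else (1 - a) / 2

lemma omega_sum (m : ℕ) (c b : ℝ) :
    ∑ i : Fin (m + 1), (if ((i : ℕ) = 0) then c else b) = c + m * b := by
  rw [Fin.sum_univ_succ]
  simp [Fin.val_succ, mul_comm]

/-- Lemma 2.20: for `n ≥ 5` and `1/3 < a < 1`, the class
`ω_a = (1 | a, (1-a)/2, …, (1-a)/2)` is normalized reduced; it satisfies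
`ω_a·(-K) > 0` (i.e. `m_1 + ⋯ + m_n < 3`) iff `a > (n-7)/(n-3)`, in which case it also
has positive square (`m_1² + ⋯ + m_n² < 1`); and for `5 ≤ n ≤ 9` one always has
`ω_a·(-K) > 0`. -/
theorem type_D_reduced_classes
    (n : ℕ) (hn : 5 ≤ n) (a : ℝ) (ha1 : 1 / 3 < a) (ha2 : a < 1) :
    (Antitone (omegaM n a) ∧ (∀ i, 0 ≤ omegaM n a i) ∧
      omegaM n a ⟨0, by omega⟩ + omegaM n a ⟨1, by omega⟩ + omegaM n a ⟨2, by omega⟩ ≤ 1) ∧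
    ((∑ i, omegaM n a i < 3) ↔ ((n : ℝ) - 7) / ((n : ℝ) - 3) < a) ∧
    (((n : ℝ) - 7) / ((n : ℝ) - 3) < a → ∑ i, (omegaM n a i) ^ 2 < 1) ∧
    (n ≤ 9 → ∑ i, omegaM n a i < 3) := by
  have hb : (0:ℝ) ≤ (1 - a) / 2 := by linarith
  have hba : (1 - a) / 2 ≤ a := by linarith
  have hn3 : (0:ℝ) < (n : ℝ) - 3 := by
    have : (5:ℝ) ≤ (n:ℝ) := by exact_mod_cast hn
    linarith
  obtain ⟨m, rfl⟩ : ∃ m, n = m + 1 := ⟨n - 1, by omega⟩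
  have hmn : ((m:ℝ) + 1) = ((m + 1 : ℕ) : ℝ) := by push_cast; ring
  have hm4 : (4:ℝ) ≤ (m:ℝ) := by exact_mod_cast (by omega : 4 ≤ m)
  have hsum : ∑ i, omegaM (m+1) a i = a + m * ((1 - a) / 2) := by
    simpa [omegaM] using omega_sum m a ((1 - a) / 2)
  have hsumsq : ∑ i, (omegaM (m+1) a i) ^ 2 = a ^ 2 + m * (((1 - a) / 2) ^ 2) := by
    have := omega_sum m (a ^ 2) (((1 - a) / 2) ^ 2)
    rw [← this]
    refine Finset.sum_congr rfl fun i _ => ?_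
    simp only [omegaM]
    split <;> rfl
  have hiff : (∑ i, omegaM (m+1) a i < 3) ↔
      (((m+1 : ℕ) : ℝ) - 7) / (((m+1 : ℕ) : ℝ) - 3) < a := by
    rw [hsum, div_lt_iff₀ (by push_cast; linarith)]
    push_cast
    constructor <;> intro h <;> nlinarith
  refine ⟨⟨?_, ?_, ?_⟩, hiff, ?_, ?_⟩
  · intro i j hij
    simp only [omegaM]
    have hle : (i : ℕ) ≤ (j : ℕ) := hij
    split_ifs with h1 h2 h2
    · exact le_rfl
    · omega
    · exact hba
    · exact le_rfl
  · intro i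
    simp only [omegaM]
    split
    · linarith
    · exact hb
  · simp only [omegaM]
    norm_num
    linarith
  · intro h
    rw [div_lt_iff₀ (by push_cast; linarith)] at h
    push_cast at h
    rw [hsumsq]
    have h1a : (0:ℝ) < 1 - a := by linarith
    have h2 : (0:ℝ) < 2 * (3 * a - 1) + (((m:ℝ) - 2) * a - ((m:ℝ) - 6)) := by nlinarith
    nlinarith [mul_pos h1a h2]
  · intro hle
    rw [hiff]
    have hm9 : (m:ℝ) ≤ 8 := by exact_mod_cast (by omega : m ≤ 8)
    rw [div_lt_iff₀ (by push_cast; linarith)]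
    push_cast
    nlinarith
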